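/- arXiv:1808.06328 — 3 statements merged into one kernel-verified Lean document; each statement's English description precedes it below -/
import Mathlib

section
/- (Leading-term lemma for integrals) Let K be a differential field of germs of meromorphic functions and θ an integral over K (θ' = f ∈ K) with |θ| large. Suppose z = Σ_{j ≤ k} z_j θ^{j/p} is a convergent Puiseux series in θ with coefficients z_j ∈ K and leading coefficient z_k ≠ 0. Then: if z_k' ≠ 0, the leading term of the Puiseux series of z' is z_k'·θ^{k/p}; if z_k' = 0, every term of z' has degree < k/p. In either case, every derivative z^{(m)} of z has Puiseux expansion in θ with all terms of degree ≤ k/p. -/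
/-- Formal termwise differentiation of a Puiseux series `z = Σ_{j ≤ k} z_j θ^{j/p}`
(the function `c : ℤ → K` records the coefficient `z_j = c j`) in an integral `θ`
over `K` (`θ' = f ∈ K`): each term `z_j θ^{j/p}` differentiates to
`z_j' θ^{j/p} + (j/p)·f·z_j·θ^{(j-p)/p}`, so the coefficient of `θ^{j/p}` in `z'`
is `δ(c j) + ((j+p)/p)·f·c (j+p)`. -/
noncomputable def DserInt {K : Type*} [Field K] (δ : Derivation ℤ K K) (f : K) (p : ℕ)
    (c : ℤ → K) : ℤ → K :=
  fun j => δ (c j) + (((j + (p : ℤ)) : ℤ) : K) / (p : K) * f * c (j + p)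

lemma DserInt_supp {K : Type*} [Field K] (δ : Derivation ℤ K K) (f : K) (p : ℕ)
    (hp : 0 < p) (k : ℤ) (c : ℤ → K) (hsupp : ∀ j, k < j → c j = 0) :
    ∀ j, k < j → DserInt δ f p c j = 0 := by
  intro j hj
  have h1 : c j = 0 := hsupp j hj
  have h2 : c (j + p) = 0 := hsupp _ (by omega)
  simp [DserInt, h1, h2]

/-- Leading-term lemma for integrals: if `z = Σ_{j ≤ k} z_j θ^{j/p}` with leading
coefficient `z_k ≠ 0`, then: if `z_k' ≠ 0` the leading term of `z'` is
`z_k'·θ^{k/p}`; if `z_k' = 0` every term of `z'` has degree `< k/p`; and every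
derivative `z^{(m)}` has all terms of degree `≤ k/p`. -/
theorem statement13 {K : Type*} [Field K] [CharZero K] (δ : Derivation ℤ K K)
    (f : K) (p : ℕ) (hp : 0 < p) (k : ℤ) (c : ℤ → K)
    (hsupp : ∀ j, k < j → c j = 0) (hlead : c k ≠ 0) :
    (δ (c k) ≠ 0 →
      (DserInt δ f p c) k = δ (c k) ∧ ∀ j, k < j → (DserInt δ f p c) j = 0) ∧
    (δ (c k) = 0 → ∀ j, k ≤ j → (DserInt δ f p c) j = 0) ∧
    (∀ m : ℕ, ∀ j, k < j → ((DserInt δ f p)^[m] c) j = 0) := by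
  have hk : DserInt δ f p c k = δ (c k) := by
    have h2 : c (k + p) = 0 := hsupp _ (by omega)
    simp [DserInt, h2]
  refine ⟨fun _ => ⟨hk, DserInt_supp δ f p hp k c hsupp⟩,
    fun h0 j hj => ?_, fun m => ?_⟩
  · rcases eq_or_lt_of_le hj with rfl | hj
    · rw [hk, h0]
    · exact DserInt_supp δ f p hp k c hsupp j hj
  · induction m with
    | zero => simpa using hsupp
    | succ n ih =>
      rw [Function.iterate_succ_apply']
      exact DserInt_supp δ f p hp k _ ih
end

section
/- Let K be a differential field and let Q be a differential polynomial over K (a polynomial in u, u', u'', … with coefficients in K) of total degree less than n, and consider the equation u^n = Q(u, u', u'', …). Suppose the constant term of T = u^n − Q is nonzero, and suppose u is given by a Puiseux series Σ_{j ≤ k} z_j θ^{j/p} in an integral θ over K (θ' = f ∈ K) with leading coefficient z_k ≠ 0, which formally satisfies T(u, u', …) = 0. Then the leading exponent k/p equals 0, and the leading coefficient z_0 ∈ K satisfies T(z_0, z_0', …) = 0, i.e. z_0 is a solution of u^n = Q(u, u', …) in K. -/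
/-- Formal differentiation of descending Puiseux series in an integral `θ` over
`K` (`θ' = f ∈ K`, denominator `p`), encoded as Laurent (Hahn) series over `ℤ`:
the coefficient at index `m` records the coefficient of `θ^{-m/p}`. The term
`z_j θ^{j/p}` differentiates to `z_j' θ^{j/p} + (j/p)·f·z_j·θ^{(j-p)/p}`. -/
noncomputable def DHahn {K : Type*} [Field K] (δ : Derivation ℤ K K) (f : K) (p : ℕ)
    (z : HahnSeries ℤ K) : HahnSeries ℤ K where
  coeff m := δ (z.coeff m) + (((p : ℤ) - m : ℤ) : K) / (p : K) * f * z.coeff (m - p)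
  isPWO_support' := by
    have h : (Function.support fun m : ℤ =>
        δ (z.coeff m) + (((p : ℤ) - m : ℤ) : K) / (p : K) * f * z.coeff (m - p))
        ⊆ z.support ∪ (fun m => m + (p : ℤ)) '' z.support := by
      intro m hm
      by_cases h1 : z.coeff m = 0
      · by_cases h2 : z.coeff (m - p) = 0
        · exact absurd (by simp [Function.mem_support, h1, h2] : _) hm
        · exact Or.inr ⟨m - p, h2, by ring⟩
      · exact Or.inl h1
    exact ((z.isPWO_support.union
      (z.isPWO_support.image_of_monotone (fun a b hab => by omega))).mono h)


section Aux
variable {K : Type*} [Field K]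

/-- support bounded below by `d` -/
def SGE (d : ℤ) (w : HahnSeries ℤ K) : Prop := ∀ m : ℤ, m < d → w.coeff m = 0

lemma sge_mul {a b : ℤ} {x y : HahnSeries ℤ K} (hx : SGE a x) (hy : SGE b y) :
    SGE (a + b) (x * y) := by
  intro m hm
  rw [HahnSeries.coeff_mul]
  refine Finset.sum_eq_zero fun ij hij => ?_
  have hsum := (Finset.mem_addAntidiagonal.mp hij).2.2
  rcases lt_or_ge ij.1 a with h | h
  · rw [hx _ h, zero_mul]
  · rw [hy ij.2 (by omega), mul_zero]

lemma coeff_mul_sge {a b : ℤ} {x y : HahnSeries ℤ K} (hx : SGE a x) (hy : SGE b y) :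
    (x * y).coeff (a + b) = x.coeff a * y.coeff b := by
  rw [HahnSeries.coeff_mul]
  refine Finset.sum_eq_single (a, b) ?_ ?_
  · rintro ⟨i, j⟩ hij hne
    have hsum := (Finset.mem_addAntidiagonal.mp hij).2.2
    simp only at hsum ⊢
    rcases lt_trichotomy i a with h | h | h
    · rw [hx _ h, zero_mul]
    · exact absurd (by rw [Prod.mk.injEq]; exact ⟨h, by omega⟩) hne
    · rw [hy _ (by omega), mul_zero]
  · intro hnm
    by_contra hc
    apply hnm
    rw [Finset.mem_addAntidiagonal]
    exact ⟨HahnSeries.mem_support _ _ |>.2 (left_ne_zero_of_mul hc),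
      HahnSeries.mem_support _ _ |>.2 (right_ne_zero_of_mul hc), rfl⟩

lemma sge_one : SGE (0 : ℤ) (1 : HahnSeries ℤ K) := by
  intro m hm
  rw [HahnSeries.coeff_one, if_neg (by omega)]

lemma sge_pow {d : ℤ} {x : HahnSeries ℤ K} (hx : SGE d x) (k : ℕ) :
    SGE ((k : ℤ) * d) (x ^ k) ∧ (x ^ k).coeff ((k : ℤ) * d) = (x.coeff d) ^ k := by
  induction k with
  | zero =>
    refine ⟨by simpa using sge_one, ?_⟩
    simp [HahnSeries.coeff_one]
  | succ k ih =>
    have he : ((k + 1 : ℕ) : ℤ) * d = d + (k : ℤ) * d := by push_cast; ring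
    constructor
    · rw [he, pow_succ']
      exact sge_mul hx ih.1
    · rw [he, pow_succ', coeff_mul_sge hx ih.1, ih.2, pow_succ']

lemma sge_prod {d : ℤ} (t : Finset ℕ) (g : ℕ → HahnSeries ℤ K) (e : ℕ → ℕ)
    (hg : ∀ i, SGE d (g i)) :
    SGE ((∑ i ∈ t, (e i : ℤ)) * d) (∏ i ∈ t, g i ^ e i) ∧
    (∏ i ∈ t, g i ^ e i).coeff ((∑ i ∈ t, (e i : ℤ)) * d)
      = ∏ i ∈ t, ((g i).coeff d) ^ e i := by
  classical
  induction t using Finset.induction with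
  | empty =>
    refine ⟨by simpa using sge_one, ?_⟩
    simp [HahnSeries.coeff_one]
  | @insert a s hni ih =>
    rw [Finset.sum_insert hni, Finset.prod_insert hni, Finset.prod_insert hni, add_mul]
    have hp := sge_pow (hg a) (e a)
    exact ⟨sge_mul hp.1 ih.1, by rw [coeff_mul_sge hp.1 ih.1, hp.2, ih.2]⟩

end Aux

section DAux
variable {K : Type*} [Field K]

lemma DHahn_coeff (δ : Derivation ℤ K K) (f : K) (p : ℕ) (z : HahnSeries ℤ K) (m : ℤ) :
    (DHahn δ f p z).coeff m
      = δ (z.coeff m) + (((p : ℤ) - m : ℤ) : K) / (p : K) * f * z.coeff (m - p) := rfl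

lemma dhahn_sge (δ : Derivation ℤ K K) (f : K) {p : ℕ} (hp : 0 < p) {d : ℤ}
    {z : HahnSeries ℤ K} (hz : SGE d z) :
    SGE d (DHahn δ f p z) ∧ (DHahn δ f p z).coeff d = δ (z.coeff d) := by
  constructor
  · intro m hm
    rw [DHahn_coeff, hz m hm, hz (m - p) (by omega), map_zero, mul_zero, zero_add]
  · rw [DHahn_coeff, hz (d - p) (by omega), mul_zero, add_zero]

lemma dhahn_iter (δ : Derivation ℤ K K) (f : K) {p : ℕ} (hp : 0 < p) {d : ℤ}
    {z : HahnSeries ℤ K} (hz : SGE d z) (i : ℕ) :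
    SGE d ((DHahn δ f p)^[i] z) ∧ ((DHahn δ f p)^[i] z).coeff d = δ^[i] (z.coeff d) := by
  induction i with
  | zero => exact ⟨hz, rfl⟩
  | succ i ih =>
    rw [Function.iterate_succ_apply', Function.iterate_succ_apply']
    have h := dhahn_sge δ f hp ih.1
    exact ⟨h.1, by rw [h.2, ih.2]⟩

/-- coefficient extraction as an additive hom -/
def coeffHom (m : ℤ) : HahnSeries ℤ K →+ K where
  toFun w := w.coeff m
  map_zero' := rfl
  map_add' _ _ := rfl

lemma algebraMap_eq_single (a : K) :
    algebraMap K (HahnSeries ℤ K) a = HahnSeries.single (0 : ℤ) a := by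
  rw [HahnSeries.algebraMap_apply', PowerSeries.algebraMap_apply, Algebra.algebraMap_self_apply,
    HahnSeries.ofPowerSeries_C, HahnSeries.C_apply]

lemma sge_algebraMap (a : K) : SGE (0 : ℤ) (algebraMap K (HahnSeries ℤ K) a) := by
  intro m hm
  rw [algebraMap_eq_single, HahnSeries.coeff_single_of_ne (by omega)]

lemma coeff_algebraMap (a : K) : (algebraMap K (HahnSeries ℤ K) a).coeff 0 = a := by
  rw [algebraMap_eq_single, HahnSeries.coeff_single_same]

end DAux

/-- Key step of Rosenlicht's theorem for generalized extensions by integral: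
if `T = u^n − Q` (`deg Q < n`) has nonzero constant term and a descending
Puiseux series `z ≠ 0` in an integral `θ` over `K` formally satisfies
`u^n = Q(u, u', …)`, then the leading exponent of `z` is `0` and its leading
coefficient `z_0 ∈ K` satisfies `z_0^n = Q(z_0, z_0', …)` in `K`. -/
theorem statement15 {K : Type*} [Field K] [CharZero K] (δ : Derivation ℤ K K)
    (f : K) (p : ℕ) (hp : 0 < p) (n : ℕ) (hn : 0 < n)
    (Q : MvPolynomial ℕ K) (hdeg : Q.totalDegree < n)
    (hT0 : MvPolynomial.coeff 0 Q ≠ 0)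
    (z : HahnSeries ℤ K) (hz : z ≠ 0)
    (hsol : z ^ n = MvPolynomial.aeval (fun i => (DHahn δ f p)^[i] z) Q) :
    (∀ m : ℤ, m < 0 → z.coeff m = 0) ∧ z.coeff 0 ≠ 0 ∧
      (z.coeff 0) ^ n = MvPolynomial.aeval (fun i => δ^[i] (z.coeff 0)) Q := by
  classical
  have hSGE : SGE z.order z := fun m hm => HahnSeries.coeff_eq_zero_of_lt_order hm
  have hc : z.coeff z.order ≠ 0 := fun h => hz (HahnSeries.coeff_order_eq_zero.mp h)
  set d : ℤ := z.order with hdd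
  have hiter := dhahn_iter δ f hp hSGE
  set g : ℕ → HahnSeries ℤ K := fun i => (DHahn δ f p)^[i] z with hg
  rw [MvPolynomial.aeval_def, MvPolynomial.eval₂_eq] at hsol
  have hprod := fun (s : ℕ →₀ ℕ) => sge_prod s.support g s (fun i => (hiter i).1)
  have hterm : ∀ s : ℕ →₀ ℕ, SGE ((∑ i ∈ s.support, (s i : ℤ)) * d)
      (algebraMap K (HahnSeries ℤ K) (Q.coeff s) * ∏ i ∈ s.support, g i ^ s i) := by
    intro s
    have h := sge_mul (sge_algebraMap (Q.coeff s)) (hprod s).1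
    rwa [zero_add] at h
  have hcoeffsum : ∀ m : ℤ,
      (∑ s ∈ Q.support,
        algebraMap K (HahnSeries ℤ K) (Q.coeff s) * ∏ i ∈ s.support, g i ^ s i).coeff m
      = ∑ s ∈ Q.support,
        (algebraMap K (HahnSeries ℤ K) (Q.coeff s) * ∏ i ∈ s.support, g i ^ s i).coeff m :=
    fun m => map_sum (coeffHom m) _ _
  have hdegs : ∀ s ∈ Q.support, (∑ i ∈ s.support, (s i : ℤ)) < (n : ℤ) := by
    intro s hs
    have h1 : (s.sum fun _ e => e) ≤ Q.totalDegree := MvPolynomial.le_totalDegree hs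
    have h2 : (∑ i ∈ s.support, (s i : ℤ)) = ((s.sum fun _ e => e : ℕ) : ℤ) := by
      rw [Finsupp.sum]; push_cast; rfl
    omega
  rcases lt_trichotomy d 0 with hd | hd | hd
  · -- d < 0 : contradiction at coefficient n*d
    exfalso
    have hL : (z ^ n).coeff ((n : ℤ) * d) = (z.coeff d) ^ n := (sge_pow hSGE n).2
    apply pow_ne_zero n hc
    rw [← hL, hsol, hcoeffsum]
    refine Finset.sum_eq_zero fun s hs => ?_
    exact hterm s _ (mul_lt_mul_of_neg_right (hdegs s hs) hd)
  · -- d = 0 : main case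
    rw [hd] at hSGE hc hiter hprod hterm
    refine ⟨hSGE, hc, ?_⟩
    have hL : (z ^ n).coeff 0 = (z.coeff 0) ^ n := by
      have h := (sge_pow hSGE n).2
      rwa [mul_zero] at h
    have hcongr := congrArg (fun w : HahnSeries ℤ K => w.coeff 0) hsol
    rw [hL, hcoeffsum] at hcongr
    rw [MvPolynomial.aeval_def, MvPolynomial.eval₂_eq, hcongr]
    refine Finset.sum_congr rfl fun s hs => ?_
    have h2 := (hprod s).2
    rw [mul_zero] at h2
    have h1 := coeff_mul_sge (sge_algebraMap (Q.coeff s)) (hprod s).1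
    rw [mul_zero, add_zero] at h1
    rw [h1, h2, coeff_algebraMap, Algebra.algebraMap_self_apply]
    congr 1
    exact Finset.prod_congr rfl fun i _ => by rw [(hiter i).2]
  · -- d > 0 : contradiction at coefficient 0
    exfalso
    have hL : (z ^ n).coeff 0 = 0 :=
      (sge_pow hSGE n).1 0 (mul_pos (by exact_mod_cast hn) hd)
    have hcongr := congrArg (fun w : HahnSeries ℤ K => w.coeff 0) hsol
    rw [hL, hcoeffsum] at hcongr
    have hR : (∑ s ∈ Q.support,
        (algebraMap K (HahnSeries ℤ K) (Q.coeff s) * ∏ i ∈ s.support, g i ^ s i).coeff 0)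
        = MvPolynomial.coeff 0 Q := by
      rw [Finset.sum_eq_single_of_mem 0 (MvPolynomial.mem_support_iff.2 hT0)]
      · rw [Finsupp.support_zero, Finset.prod_empty, mul_one, coeff_algebraMap]
      · intro s hs hne
        refine hterm s 0 ?_
        have h1 : (1 : ℤ) ≤ ∑ i ∈ s.support, (s i : ℤ) := by
          obtain ⟨i, hi⟩ := Finsupp.support_nonempty_iff.2 hne
          have h2 : (1 : ℤ) ≤ (s i : ℤ) := by
            have h3 := Finsupp.mem_support_iff.1 hi; omega
          calc (1 : ℤ) ≤ (s i : ℤ) := h2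
            _ ≤ ∑ i ∈ s.support, (s i : ℤ) :=
              Finset.single_le_sum (f := fun j => (s j : ℤ)) (fun j _ => by positivity) hi
        exact mul_pos (by omega) hd
    exact hT0 (by rw [← hR, ← hcongr])
end

section
/- Define the ξ-weighted degree of a monomial x_0^{p_0} x_1^{p_1} ⋯ x_n^{p_n} to be Σ_{i=0}^{n} i·p_i. Let P(x_0, …, x_n) be a homogeneous polynomial of degree m over a differential field K such that the sum of the coefficients of all monomials of P of maximal ξ-weighted degree is nonzero. Then the generalized Riccati equation P(D_0(u), D_1(u), …, D_n(u)) = 0, written as an equation u^N = Q(u, u', …) with N the maximal ξ-weighted degree, has the form covered by Rosenlicht's theorem: the degree-N part in u (as the highest power of u) has nonzero coefficient and Q has total degree less than N. -/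
open MvPolynomial

/-- The derivation on the differential polynomial ring `ℤ{u}`, `u^{(i)} ↦ u^{(i+1)}`. -/
noncomputable def shiftD : Derivation ℤ (MvPolynomial ℕ ℤ) (MvPolynomial ℕ ℤ) :=
  MvPolynomial.mkDerivation ℤ (fun i => MvPolynomial.X (i + 1))

/-- The differential polynomials `D_0 = 1`, `D_{k+1} = D_k' + u·D_k`. -/
noncomputable def Dpoly : ℕ → MvPolynomial ℕ ℤ
  | 0 => 1
  | k + 1 => shiftD (Dpoly k) + MvPolynomial.X 0 * Dpoly k

/-- The ξ-weighted degree of the monomial `x_0^{p_0} ⋯ x_n^{p_n}`, namely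
`Σ_{i=0}^{n} i·p_i`. -/
def xiDeg {n : ℕ} (d : Fin (n + 1) →₀ ℕ) : ℕ := ∑ i : Fin (n + 1), (i : ℕ) * d i

/-! ### Auxiliary lemmas -/

/-- Every monomial of `F` has total degree `< N`. -/
def degLT {R : Type*} [CommSemiring R] (N : ℕ) (F : MvPolynomial ℕ R) : Prop :=
  ∀ d ∈ F.support, (d.sum fun _ e => e) < N

section aux

variable {R : Type*} [CommRing R]

lemma degLT_zero {N : ℕ} : degLT N (0 : MvPolynomial ℕ R) := by
  intro d hd; simp at hd

lemma degLT_mono {a b : ℕ} {F : MvPolynomial ℕ R} (hab : a ≤ b) (h : degLT a F) :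
    degLT b F := fun d hd => lt_of_lt_of_le (h d hd) hab

lemma degLT_of_totalDegree_lt {N : ℕ} {F : MvPolynomial ℕ R}
    (h : F.totalDegree < N) : degLT N F := fun d hd =>
  lt_of_le_of_lt (MvPolynomial.le_totalDegree hd) h

lemma totalDegree_le_of_degLT {N : ℕ} {F : MvPolynomial ℕ R} (h : degLT N F) :
    F.totalDegree ≤ N :=
  Finset.sup_le fun d hd => le_of_lt (h d hd)

lemma totalDegree_lt_of_degLT {N : ℕ} {F : MvPolynomial ℕ R} (hN : 0 < N)
    (h : degLT N F) : F.totalDegree < N := by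
  rw [MvPolynomial.totalDegree, Finset.sup_lt_iff (show ⊥ < N from hN)]
  exact h

lemma degLT_add {N : ℕ} {F G : MvPolynomial ℕ R} (hF : degLT N F) (hG : degLT N G) :
    degLT N (F + G) := by
  intro d hd
  rcases Finset.mem_union.1 (MvPolynomial.support_add hd) with h | h
  · exact hF d h
  · exact hG d h

lemma degLT_neg {N : ℕ} {F : MvPolynomial ℕ R} (hF : degLT N F) : degLT N (-F) := by
  intro d hd
  rw [MvPolynomial.support_neg] at hd
  exact hF d hd

lemma degLT_sum {N : ℕ} {ι : Type*} {s : Finset ι} {g : ι → MvPolynomial ℕ R}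
    (h : ∀ i ∈ s, degLT N (g i)) : degLT N (∑ i ∈ s, g i) := by
  classical
  induction s using Finset.cons_induction with
  | empty => simpa using (degLT_zero : degLT N (0 : MvPolynomial ℕ R))
  | cons i s hi ih =>
    rw [Finset.sum_cons]
    exact degLT_add (h i (Finset.mem_cons_self i s))
      (ih fun j hj => h j (Finset.mem_cons_of_mem hj))

lemma degLT_mul {a b : ℕ} {p G : MvPolynomial ℕ R} (hp : p.totalDegree ≤ a)
    (hG : degLT b G) : degLT (a + b) (p * G) := by
  classical
  intro d hd
  have hd' := MvPolynomial.support_mul p G hd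
  rw [Finset.mem_add] at hd'
  obtain ⟨d₁, h₁, d₂, h₂, rfl⟩ := hd'
  have hsum : ((d₁ + d₂).sum fun _ e => e) = (d₁.sum fun _ e => e) + (d₂.sum fun _ e => e) :=
    Finsupp.sum_add_index' (fun _ => rfl) (fun _ _ _ => rfl)
  rw [hsum]
  exact add_lt_add_of_le_of_lt (le_trans (MvPolynomial.le_totalDegree h₁) hp) (hG d₂ h₂)

lemma degLT_mul' {a b : ℕ} {F q : MvPolynomial ℕ R} (hF : degLT a F)
    (hq : q.totalDegree ≤ b) : degLT (a + b) (F * q) := by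
  rw [mul_comm, add_comm]
  exact degLT_mul hq hF

/-- `p` equals `X 0 ^ a` plus terms of total degree `< a`. -/
def isGood (a : ℕ) (p : MvPolynomial ℕ R) : Prop :=
  ∃ F, p = MvPolynomial.X 0 ^ a + F ∧ degLT a F

lemma isGood_one : isGood 0 (1 : MvPolynomial ℕ R) :=
  ⟨0, by simp, degLT_zero⟩

variable [Nontrivial R]

lemma isGood_mul {a b : ℕ} {p q : MvPolynomial ℕ R} (hp : isGood a p) (hq : isGood b q) :
    isGood (a + b) (p * q) := by
  obtain ⟨F, rfl, hF⟩ := hp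
  obtain ⟨G, rfl, hG⟩ := hq
  refine ⟨MvPolynomial.X 0 ^ a * G + F * MvPolynomial.X 0 ^ b + F * G, by ring, ?_⟩
  have hXa : (MvPolynomial.X (R := R) 0 ^ a).totalDegree ≤ a := by
    rw [MvPolynomial.totalDegree_X_pow]
  have hXb : (MvPolynomial.X (R := R) 0 ^ b).totalDegree ≤ b := by
    rw [MvPolynomial.totalDegree_X_pow]
  exact degLT_add (degLT_add (degLT_mul hXa hG) (degLT_mul' hF hXb))
    (degLT_mul (totalDegree_le_of_degLT hF) hG)

lemma isGood_pow {a : ℕ} {p : MvPolynomial ℕ R} (hp : isGood a p) (k : ℕ) :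
    isGood (k * a) (p ^ k) := by
  induction k with
  | zero => simpa using isGood_one
  | succ k ih =>
    have := isGood_mul ih hp
    rw [← pow_succ] at this
    rwa [show (k + 1) * a = k * a + a by ring]

lemma isGood_prod {ι : Type*} (s : Finset ι) (p : ι → MvPolynomial ℕ R) (a : ι → ℕ)
    (h : ∀ i ∈ s, isGood (a i) (p i)) :
    isGood (∑ i ∈ s, a i) (∏ i ∈ s, p i) := by
  classical
  induction s using Finset.cons_induction with
  | empty => simpa using isGood_one
  | cons i s hi ih =>
    rw [Finset.sum_cons, Finset.prod_cons]
    exact isGood_mul (h i (Finset.mem_cons_self i s))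
      (ih fun j hj => h j (Finset.mem_cons_of_mem hj))

end aux

lemma shiftD_monomial_totalDegree (s : ℕ →₀ ℕ) (r : ℤ) :
    (shiftD (MvPolynomial.monomial s r)).totalDegree ≤ s.sum fun _ e => e := by
  rw [shiftD, MvPolynomial.mkDerivation_monomial]
  refine le_trans (MvPolynomial.totalDegree_smul_le _ _) ?_
  rw [Finsupp.sum]
  refine le_trans (MvPolynomial.totalDegree_finset_sum _ _) (Finset.sup_le fun i hi => ?_)
  have hi' : s i ≠ 0 := Finsupp.mem_support_iff.1 hi
  have hle : Finsupp.single i 1 ≤ s := Finsupp.single_le_iff.2 (Nat.one_le_iff_ne_zero.2 hi')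
  have hsplit : (s - Finsupp.single i 1) + Finsupp.single i 1 = s := tsub_add_cancel_of_le hle
  have hsum : ((s - Finsupp.single i 1).sum fun _ e => e) + 1 = s.sum fun _ e => e := by
    conv_rhs => rw [← hsplit]
    rw [Finsupp.sum_add_index' (fun _ => rfl) (fun _ _ _ => rfl),
      Finsupp.sum_single_index rfl]
  calc ((MvPolynomial.monomial (s - Finsupp.single i 1) ((s i : ℤ))) •
          (MvPolynomial.X (i + 1) : MvPolynomial ℕ ℤ)).totalDegree
      = ((MvPolynomial.monomial (s - Finsupp.single i 1) ((s i : ℤ))) *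
          MvPolynomial.X (i + 1)).totalDegree := by rw [smul_eq_mul]
    _ ≤ ((MvPolynomial.monomial (s - Finsupp.single i 1) ((s i : ℤ)))).totalDegree +
          (MvPolynomial.X (i + 1) : MvPolynomial ℕ ℤ).totalDegree :=
        MvPolynomial.totalDegree_mul _ _
    _ ≤ ((s - Finsupp.single i 1).sum fun _ e => e) + 1 := by
        gcongr
        · exact MvPolynomial.totalDegree_monomial_le _ _
        · exact le_of_eq (MvPolynomial.totalDegree_X _)
    _ = s.sum fun _ e => e := hsum

lemma shiftD_totalDegree (p : MvPolynomial ℕ ℤ) :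
    (shiftD p).totalDegree ≤ p.totalDegree := by
  classical
  refine Finset.sup_le fun d hd => ?_
  have hrw : shiftD p = ∑ s ∈ p.support, shiftD (MvPolynomial.monomial s (p.coeff s)) := by
    conv_lhs => rw [p.as_sum]
    rw [map_sum]
  rw [hrw] at hd
  obtain ⟨s, hs, hds⟩ := Finset.mem_biUnion.1 (MvPolynomial.support_sum hd)
  calc (d.sum fun _ e => e)
      ≤ (shiftD (MvPolynomial.monomial s (p.coeff s))).totalDegree :=
        MvPolynomial.le_totalDegree hds
    _ ≤ s.sum fun _ e => e := shiftD_monomial_totalDegree _ _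
    _ ≤ p.totalDegree := MvPolynomial.le_totalDegree hs

lemma Dpoly_good (k : ℕ) : isGood k (Dpoly k) := by
  induction k with
  | zero => simpa [Dpoly] using (isGood_one : isGood 0 (1 : MvPolynomial ℕ ℤ))
  | succ k ih =>
    obtain ⟨F, hF, hFd⟩ := ih
    refine ⟨shiftD (Dpoly k) + MvPolynomial.X 0 * F, ?_, ?_⟩
    · show shiftD (Dpoly k) + MvPolynomial.X 0 * Dpoly k = _
      rw [hF]; ring
    · refine degLT_add ?_ ?_
      · refine degLT_of_totalDegree_lt (lt_of_le_of_lt (shiftD_totalDegree _) ?_)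
        calc (Dpoly k).totalDegree ≤ k := by
              rw [hF]
              refine le_trans (MvPolynomial.totalDegree_add _ _) (max_le ?_ ?_)
              · rw [MvPolynomial.totalDegree_X_pow]
              · exact totalDegree_le_of_degLT hFd
          _ < k + 1 := Nat.lt_succ_self k
      · have hx : (MvPolynomial.X (R := ℤ) (0 : ℕ)).totalDegree ≤ 1 :=
          le_of_eq (MvPolynomial.totalDegree_X _)
        have := degLT_mul hx hFd
        rwa [add_comm 1 k] at this

lemma DpolyK_good {K : Type*} [Field K] (k : ℕ) :
    isGood k (MvPolynomial.map (Int.castRingHom K) (Dpoly k)) := by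
  obtain ⟨F, hF, hFd⟩ := Dpoly_good k
  refine ⟨MvPolynomial.map (Int.castRingHom K) F, ?_, ?_⟩
  · rw [hF, map_add, map_pow, MvPolynomial.map_X]
  · intro d hd
    exact hFd d (MvPolynomial.support_map_subset _ _ hd)

/-- Let `P(x_0, …, x_n)` be homogeneous of degree `m` over `K`, `N > 0` its
maximal ξ-weighted degree, and suppose the sum `c` of the coefficients of the
monomials of maximal ξ-weighted degree is nonzero. Then the generalized Riccati
equation `P(D_0(u), …, D_n(u)) = 0` has the form covered by Rosenlicht's
theorem: `P(D_0(u), …, D_n(u)) = c·(u^N − Q)` where the differential polynomial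
`Q` has total degree `< N`. -/
theorem statement18 {K : Type*} [Field K] [CharZero K] (n m N : ℕ)
    (P : MvPolynomial (Fin (n + 1)) K) (hhom : P.IsHomogeneous m)
    (hN : N = P.support.sup xiDeg) (hNpos : 0 < N)
    (hcond : (∑ d ∈ P.support.filter (fun d => xiDeg d = N), P.coeff d) ≠ 0) :
    ∃ Q : MvPolynomial ℕ K, Q.totalDegree < N ∧
      MvPolynomial.aeval
          (fun i : Fin (n + 1) => MvPolynomial.map (Int.castRingHom K) (Dpoly i)) P =
        MvPolynomial.C (∑ d ∈ P.support.filter (fun d => xiDeg d = N), P.coeff d) *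
          (MvPolynomial.X 0 ^ N - Q) := by
  classical
  set c : K := ∑ d ∈ P.support.filter (fun d => xiDeg d = N), P.coeff d with hc
  set f : Fin (n + 1) → MvPolynomial ℕ K :=
    fun i => MvPolynomial.map (Int.castRingHom K) (Dpoly i) with hf
  -- goodness of the monomial substitutions
  have hgood : ∀ d : Fin (n + 1) →₀ ℕ,
      isGood (xiDeg d) (∏ i : Fin (n + 1), f i ^ d i) := by
    intro d
    have := isGood_prod (Finset.univ : Finset (Fin (n + 1)))
      (fun i => f i ^ d i) (fun i => d i * (i : ℕ))
      (fun i _ => isGood_pow (DpolyK_good (K := K) (i : ℕ)) (d i))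
    simpa [xiDeg, mul_comm] using this
  choose G hG hGd using fun d => hgood d
  -- expand the evaluation
  have hexp : MvPolynomial.aeval f P =
      ∑ d ∈ P.support, MvPolynomial.C (P.coeff d) *
        (MvPolynomial.X 0 ^ xiDeg d + G d) := by
    conv_lhs => rw [P.as_sum]
    rw [map_sum]
    refine Finset.sum_congr rfl fun d _ => ?_
    rw [MvPolynomial.aeval_monomial, MvPolynomial.algebraMap_eq, ← hG d]
    congr 1
    exact Finsupp.prod_fintype d (fun i k => f i ^ k) (fun i => pow_zero _)
  -- split into the leading part and lower-order parts
  have hsplit : MvPolynomial.aeval f P = MvPolynomial.C c * MvPolynomial.X 0 ^ N +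
      ((∑ d ∈ P.support.filter (fun d => ¬ xiDeg d = N),
          MvPolynomial.C (P.coeff d) * MvPolynomial.X 0 ^ xiDeg d) +
        ∑ d ∈ P.support, MvPolynomial.C (P.coeff d) * G d) := by
    have h1 : (∑ d ∈ P.support, MvPolynomial.C (P.coeff d) * MvPolynomial.X 0 ^ xiDeg d)
        = MvPolynomial.C c * MvPolynomial.X 0 ^ N +
          ∑ d ∈ P.support.filter (fun d => ¬ xiDeg d = N),
            MvPolynomial.C (P.coeff d) * MvPolynomial.X 0 ^ xiDeg d := by
      rw [← Finset.sum_filter_add_sum_filter_not P.support (fun d => xiDeg d = N)]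
      congr 1
      rw [hc, map_sum, Finset.sum_mul]
      refine Finset.sum_congr rfl fun d hd => ?_
      rw [(Finset.mem_filter.1 hd).2]
    rw [hexp]
    simp only [mul_add, Finset.sum_add_distrib]
    rw [h1, add_assoc]
  set R : MvPolynomial ℕ K :=
    (∑ d ∈ P.support.filter (fun d => ¬ xiDeg d = N),
        MvPolynomial.C (P.coeff d) * MvPolynomial.X 0 ^ xiDeg d) +
      ∑ d ∈ P.support, MvPolynomial.C (P.coeff d) * G d with hR
  have hRd : degLT N R := by
    refine degLT_add (degLT_sum fun d hd => ?_) (degLT_sum fun d hd => ?_)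
    · obtain ⟨hd1, hd2⟩ := Finset.mem_filter.1 hd
      have hlt : xiDeg d < N :=
        lt_of_le_of_ne (hN ▸ Finset.le_sup hd1) hd2
      refine degLT_of_totalDegree_lt (lt_of_le_of_lt ?_ hlt)
      refine le_trans (MvPolynomial.totalDegree_mul _ _) ?_
      rw [MvPolynomial.totalDegree_C, MvPolynomial.totalDegree_X_pow, zero_add]
    · have hle : xiDeg d ≤ N := hN ▸ Finset.le_sup hd
      have : degLT (0 + xiDeg d) (MvPolynomial.C (P.coeff d) * G d) :=
        degLT_mul (le_of_eq (MvPolynomial.totalDegree_C _)) (hGd d)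
      rw [zero_add] at this
      exact degLT_mono hle this
  refine ⟨-(MvPolynomial.C c⁻¹ * R), ?_, ?_⟩
  · refine totalDegree_lt_of_degLT hNpos (degLT_neg ?_)
    have : degLT (0 + N) (MvPolynomial.C c⁻¹ * R) :=
      degLT_mul (le_of_eq (MvPolynomial.totalDegree_C _)) hRd
    rwa [zero_add] at this
  · rw [show MvPolynomial.aeval f P = MvPolynomial.C c * MvPolynomial.X 0 ^ N + R from hsplit]
    rw [sub_neg_eq_add, mul_add, ← mul_assoc, ← MvPolynomial.C_mul,
      mul_inv_cancel₀ hcond, MvPolynomial.C_1, one_mul]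
end
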